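/- arXiv:2007.10131 — 7 statements merged into one kernel-verified Lean document; each statement's English description precedes it below -/
import Mathlib

section
/- For integers T ≥ 1, 0 ≤ k < T, and k < i < T, one has (1/(T-i))·Σ_{j=0}^{T-i-1} (T-i-j)/(T-j) ≤ (1/T)·(k + Σ_{j=1}^{T-k} j/(k+j)). -/
noncomputable def auxS (T x : ℕ) : ℝ := ∑ n ∈ Finset.Icc (x + 1) T, (1 : ℝ) / (n : ℝ)

lemma auxS_nonneg (T x : ℕ) : 0 ≤ auxS T x :=
  Finset.sum_nonneg fun n _ => by positivity

lemma auxS_lb (T x : ℕ) (hx : x < T) : (T : ℝ) - x ≤ (T : ℝ) * auxS T x := by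
  have hT0 : (0 : ℝ) < T := by exact_mod_cast Nat.pos_of_ne_zero (by omega)
  have hcard : (Finset.Icc (x + 1) T).card = T - x := by rw [Nat.card_Icc]; omega
  have h2 : ∑ n ∈ Finset.Icc (x + 1) T, (1 : ℝ) / T ≤ auxS T x := by
    apply Finset.sum_le_sum
    intro n hn
    rw [Finset.mem_Icc] at hn
    have hn0 : (0 : ℝ) < n := by exact_mod_cast Nat.lt_of_lt_of_le (Nat.succ_pos x) hn.1
    have hnT : (n : ℝ) ≤ T := by exact_mod_cast hn.2
    exact one_div_le_one_div_of_le hn0 hnT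
  rw [Finset.sum_const, hcard, nsmul_eq_mul, Nat.cast_sub hx.le] at h2
  have h3 := mul_le_mul_of_nonneg_left h2 hT0.le
  calc (T : ℝ) - x = (T : ℝ) * (((T : ℝ) - x) * (1 / T)) := by field_simp
    _ ≤ (T : ℝ) * auxS T x := h3

lemma auxS_succ (T x : ℕ) (hx : x + 1 ≤ T) :
    auxS T x = 1 / ((x : ℝ) + 1) + auxS T (x + 1) := by
  unfold auxS
  have hins : Finset.Icc (x + 1) T = insert (x + 1) (Finset.Icc (x + 2) T) := by
    ext n; simp only [Finset.mem_Icc, Finset.mem_insert]; omega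
  rw [hins, Finset.sum_insert (by simp)]
  simp only [one_div]
  push_cast
  ring_nf

lemma auxS_step (T x : ℕ) (hx : x + 1 < T) :
    (x : ℝ) / ((T : ℝ) - x) * auxS T x ≤ ((x : ℝ) + 1) / ((T : ℝ) - x - 1) * auxS T (x + 1) := by
  have ha : 0 ≤ auxS T (x + 1) := auxS_nonneg T (x + 1)
  have hTa : (T : ℝ) - x - 1 ≤ (T : ℝ) * auxS T (x + 1) := by
    have := auxS_lb T (x + 1) hx
    push_cast at this
    linarith
  have h1 : (0 : ℝ) < (T : ℝ) - x := by
    have : (x : ℝ) < T := by exact_mod_cast Nat.lt_of_succ_lt hx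
    linarith
  have h2 : (0 : ℝ) < (T : ℝ) - x - 1 := by
    have : ((x : ℕ) + 1 : ℝ) < T := by exact_mod_cast hx
    push_cast at this
    linarith
  have h3 : (0 : ℝ) < (x : ℝ) + 1 := by positivity
  rw [auxS_succ T x (Nat.le_of_lt hx)]
  set a := auxS T (x + 1) with hadef
  rw [div_mul_eq_mul_div, div_mul_eq_mul_div, div_le_div_iff₀ h1 h2]
  have h5 : (x : ℝ) * (1 / ((x : ℝ) + 1)) ≤ 1 := by
    rw [mul_one_div]
    apply div_le_one_of_le₀ <;> linarith
  nlinarith [mul_le_mul_of_nonneg_right h5 h2.le, hTa, ha, mul_nonneg ha h2.le]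

lemma auxS_mono (T k : ℕ) : ∀ x, k ≤ x → x < T →
    (k : ℝ) / ((T : ℝ) - k) * auxS T k ≤ (x : ℝ) / ((T : ℝ) - x) * auxS T x := by
  intro x hkx
  induction x, hkx using Nat.le_induction with
  | base => intro _; exact le_refl _
  | succ x hx ih =>
    intro hxT
    have hx1T : x < T := by omega
    refine le_trans (ih hx1T) ?_
    have := auxS_step T x (by omega)
    push_cast
    exact this.trans_eq (by ring)

theorem stmt_1 (T k i : ℕ) (hT : 1 ≤ T) (hk : k < T) (hki : k < i) (hiT : i < T) :
    (1 / ((T : ℝ) - (i : ℝ))) *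
        ∑ j ∈ Finset.range (T - i), (((T : ℝ) - (i : ℝ) - (j : ℝ)) / ((T : ℝ) - (j : ℝ)))
      ≤ (1 / (T : ℝ)) * ((k : ℝ) + ∑ j ∈ Finset.Icc 1 (T - k), (j : ℝ) / ((k : ℝ) + (j : ℝ))) := by
  have hT0 : (0 : ℝ) < T := by exact_mod_cast hT
  have hTi : (0 : ℝ) < (T : ℝ) - i := by
    have : (i : ℝ) < T := by exact_mod_cast hiT
    linarith
  have hTk : (0 : ℝ) < (T : ℝ) - k := by
    have : (k : ℝ) < T := by exact_mod_cast hk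
    linarith
  -- reindex the LHS inner reciprocal sum
  have hsumL : ∑ j ∈ Finset.range (T - i), (1 : ℝ) / ((T : ℝ) - j) = auxS T i := by
    unfold auxS
    apply Finset.sum_nbij' (i := fun j => T - j) (j := fun n => T - n)
    · intro a ha
      rw [Finset.mem_range] at ha
      rw [Finset.mem_Icc]
      omega
    · intro a ha
      rw [Finset.mem_Icc] at ha
      rw [Finset.mem_range]
      omega
    · intro a ha
      rw [Finset.mem_range] at ha
      omega
    · intro a ha
      rw [Finset.mem_Icc] at ha
      omega
    · intro a ha
      rw [Finset.mem_range] at ha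
      have : ((T - a : ℕ) : ℝ) = (T : ℝ) - a := by
        rw [Nat.cast_sub (by omega)]
      rw [this]
  -- reindex the RHS inner reciprocal sum
  have hsumR : ∑ j ∈ Finset.Icc 1 (T - k), (1 : ℝ) / ((k : ℝ) + j) = auxS T k := by
    unfold auxS
    apply Finset.sum_nbij' (i := fun j => k + j) (j := fun n => n - k)
    · intro a ha
      rw [Finset.mem_Icc] at ha ⊢
      omega
    · intro a ha
      rw [Finset.mem_Icc] at ha ⊢
      omega
    · intro a ha
      omega
    · intro a ha
      rw [Finset.mem_Icc] at ha
      omega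
    · intro a ha
      rw [Finset.mem_Icc] at ha
      push_cast
      ring_nf
  -- rewrite LHS
  have hL : (1 / ((T : ℝ) - i)) *
      ∑ j ∈ Finset.range (T - i), (((T : ℝ) - i - j) / ((T : ℝ) - j))
      = 1 - (i : ℝ) / ((T : ℝ) - i) * auxS T i := by
    have hterm : ∀ j ∈ Finset.range (T - i),
        ((T : ℝ) - i - j) / ((T : ℝ) - j) = 1 - (i : ℝ) * ((1 : ℝ) / ((T : ℝ) - j)) := by
      intro j hj
      rw [Finset.mem_range] at hj
      have hj2 : (j : ℝ) < (T : ℝ) - i := by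
        have : (j : ℝ) < ((T - i : ℕ) : ℝ) := by exact_mod_cast hj
        rw [Nat.cast_sub hiT.le] at this
        linarith
      have hd : (0 : ℝ) < (T : ℝ) - j := by linarith
      field_simp
      ring
    rw [Finset.sum_congr rfl hterm, Finset.sum_sub_distrib, ← Finset.mul_sum, hsumL,
      Finset.sum_const, Finset.card_range, nsmul_eq_mul, mul_one, Nat.cast_sub hiT.le]
    field_simp
  -- rewrite RHS
  have hR : (1 / (T : ℝ)) * ((k : ℝ) + ∑ j ∈ Finset.Icc 1 (T - k), (j : ℝ) / ((k : ℝ) + j))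
      = 1 - (k : ℝ) / (T : ℝ) * auxS T k := by
    have hterm : ∀ j ∈ Finset.Icc 1 (T - k),
        (j : ℝ) / ((k : ℝ) + j) = 1 - (k : ℝ) * ((1 : ℝ) / ((k : ℝ) + j)) := by
      intro j hj
      rw [Finset.mem_Icc] at hj
      have hj1 : (1 : ℝ) ≤ (j : ℝ) := by exact_mod_cast hj.1
      have hd : (0 : ℝ) < (k : ℝ) + j := by positivity
      field_simp
      ring
    have hcard : (Finset.Icc 1 (T - k)).card = T - k := by rw [Nat.card_Icc]; omega
    rw [Finset.sum_congr rfl hterm, Finset.sum_sub_distrib, ← Finset.mul_sum, hsumR,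
      Finset.sum_const, hcard, nsmul_eq_mul, mul_one, Nat.cast_sub hk.le]
    field_simp
    ring
  rw [hL, hR]
  have key : (k : ℝ) / (T : ℝ) * auxS T k ≤ (i : ℝ) / ((T : ℝ) - i) * auxS T i := by
    have step1 : (k : ℝ) / (T : ℝ) * auxS T k ≤ (k : ℝ) / ((T : ℝ) - k) * auxS T k := by
      apply mul_le_mul_of_nonneg_right _ (auxS_nonneg T k)
      gcongr
      all_goals linarith [(Nat.cast_nonneg k : (0:ℝ) ≤ k)]
    exact le_trans step1 (auxS_mono T k i hki.le hiT)
  linarith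
end

section
/- For integers T ≥ 1 and 0 ≤ k ≤ T, one has (1/T)·Σ_{j=1}^{T-k} j/(k+j) ≥ ∫_0^{1-k/T} (1 - k/T - x)/(1 - x) dx. -/
open MeasureTheory Finset

theorem stmt_5 (T k : ℕ) (hT : 1 ≤ T) (hk : k ≤ T) :
    (1 / (T : ℝ)) * ∑ j ∈ Finset.Icc 1 (T - k), (j : ℝ) / ((k : ℝ) + (j : ℝ))
      ≥ ∫ x in (0 : ℝ)..(1 - (k : ℝ) / (T : ℝ)), (1 - (k : ℝ) / (T : ℝ) - x) / (1 - x) := by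
  have hT0 : (0:ℝ) < T := by exact_mod_cast Nat.lt_of_lt_of_le Nat.zero_lt_one hT
  rcases Nat.eq_zero_or_pos k with rfl | hk1
  · -- k = 0 : both sides equal 1
    simp only [Nat.cast_zero, zero_add, zero_div, sub_zero, Nat.sub_zero]
    have h1 : ∀ j ∈ Finset.Icc 1 T, (j:ℝ)/(j:ℝ) = 1 := by
      intro j hj
      have hj1 : (1:ℕ) ≤ j := (Finset.mem_Icc.mp hj).1
      have : (j:ℝ) ≠ 0 := Nat.cast_ne_zero.mpr (by omega)
      exact div_self this
    rw [Finset.sum_congr rfl h1, Finset.sum_const, Nat.card_Icc]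
    have hInt : (∫ x in (0:ℝ)..1, (1 - x)/(1 - x)) = 1 := by
      have hne : ∀ᵐ x : ℝ, x ≠ 1 := by
        rw [ae_iff]
        simp [not_not]
      have : (∫ x in (0:ℝ)..1, (1 - x)/(1 - x)) = ∫ x in (0:ℝ)..1, (1:ℝ) := by
        apply intervalIntegral.integral_congr_ae
        filter_upwards [hne] with x hx _
        exact div_self (sub_ne_zero.mpr (Ne.symm hx))
      rw [this]; simp
    rw [hInt]
    simp only [Nat.add_sub_cancel, ge_iff_le, nsmul_eq_mul, mul_one, one_div]
    rw [mul_comm, mul_inv_cancel₀ hT0.ne']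
  · -- main case k ≥ 1
    set n := T - k with hn
    have hkT : k + n = T := Nat.add_sub_cancel' hk
    have hnR : (n:ℝ) = (T:ℝ) - k := by
      rw [hn, Nat.cast_sub hk]
    have hkR1 : (1:ℝ) ≤ k := by exact_mod_cast hk1
    have hnle : (n:ℝ) ≤ (T:ℝ) - 1 := by rw [hnR]; linarith
    set F : ℝ → ℝ := fun x => (1 - (k:ℝ)/T - x)/(1 - x) with hF
    set a : ℕ → ℝ := fun i => (i:ℝ)/T with ha
    have h1c : 1 - (k:ℝ)/T = a n := by
      rw [ha]; simp only []; rw [hnR]; field_simp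
    have halt : ∀ i : ℕ, i < n → ∀ x ∈ Set.Icc (a i) (a (i+1)), x < 1 := by
      intro i hi x hx
      have h2 : x ≤ a (i+1) := hx.2
      have hiR : (i:ℝ) + 1 ≤ n := by exact_mod_cast hi
      have : a (i+1) < 1 := by
        rw [ha]; simp only []
        rw [div_lt_one hT0]; push_cast; linarith
      linarith
    have hle : ∀ i : ℕ, a i ≤ a (i+1) := by
      intro i; rw [ha]; simp only []
      gcongr
      linarith
    have hcont : ∀ i : ℕ, i < n → ContinuousOn F (Set.Icc (a i) (a (i+1))) := by
      intro i hi
      apply ContinuousOn.div (by fun_prop) (by fun_prop)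
      intro x hx
      have := halt i hi x hx
      intro h; linarith [sub_eq_zero.mp h]
    have hInt : ∀ i : ℕ, i < n → IntervalIntegrable F volume (a i) (a (i+1)) := by
      intro i hi
      exact ((hcont i hi).mono (by rw [Set.uIcc_of_le (hle i)])).intervalIntegrable
    have hdecomp := intervalIntegral.sum_integral_adjacent_intervals (a := a) (μ := volume)
      (f := F) hInt
    have ha0 : a 0 = 0 := by rw [ha]; simp
    have hwidth : ∀ i : ℕ, a (i+1) - a i = 1/T := by
      intro i; rw [ha]; simp only []; push_cast; field_simp; ring
    -- value at left endpoint
    have hFa : ∀ i : ℕ, i < n → F (a i) = ((n-i:ℕ):ℝ)/((k:ℝ) + ((n-i:ℕ):ℝ)) := by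
      intro i hi
      have hni : ((n-i:ℕ):ℝ) = (n:ℝ) - i := by rw [Nat.cast_sub hi.le]
      have hiT : (i:ℝ) < T := by
        have : (i:ℝ) + 1 ≤ n := by exact_mod_cast hi
        linarith
      rw [hF, ha]; simp only []
      rw [hni, hnR]
      have h1 : 1 - (i:ℝ)/T ≠ 0 := by
        rw [sub_ne_zero]; intro h
        have := (div_eq_one_iff_eq hT0.ne').mp h.symm
        linarith
      field_simp
      ring
    -- monotonicity bound on each piece
    have hmono : ∀ i : ℕ, i < n → ∀ x ∈ Set.Icc (a i) (a (i+1)), F x ≤ F (a i) := by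
      intro i hi x hx
      have hx1 : x < 1 := halt i hi x hx
      have hai1 : a i < 1 := halt i hi (a i) ⟨le_refl _, hle i⟩
      have hrw : ∀ y : ℝ, y < 1 → F y = 1 - ((k:ℝ)/T)/(1 - y) := by
        intro y hy
        rw [hF]; simp only []
        have : (1:ℝ) - y ≠ 0 := by intro h; linarith [sub_eq_zero.mp h]
        field_simp
        ring
      rw [hrw x hx1, hrw (a i) hai1]
      have hk0 : (0:ℝ) ≤ (k:ℝ)/T := by positivity
      have : ((k:ℝ)/T)/(1 - a i) ≤ ((k:ℝ)/T)/(1 - x) := by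
        apply div_le_div_of_nonneg_left hk0 (by linarith) (by linarith [hx.1])
      linarith
    have hbound : ∀ i ∈ Finset.range n,
        (∫ x in a i..a (i+1), F x) ≤ ((n-i:ℕ):ℝ)/((k:ℝ) + ((n-i:ℕ):ℝ)) * (1/T) := by
      intro i hi'
      have hi := Finset.mem_range.mp hi'
      have h1 : (∫ x in a i..a (i+1), F x) ≤ ∫ _x in a i..a (i+1), F (a i) :=
        intervalIntegral.integral_mono_on (hle i) (hInt i hi)
          intervalIntegrable_const (hmono i hi)
      rw [intervalIntegral.integral_const, hwidth i, smul_eq_mul, hFa i hi] at h1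
      linarith [h1]
    -- assemble
    have hchain : (∫ x in (0:ℝ)..(1 - (k:ℝ)/T), F x)
        ≤ ∑ i ∈ Finset.range n, ((n-i:ℕ):ℝ)/((k:ℝ) + ((n-i:ℕ):ℝ)) * (1/T) := by
      rw [h1c, ← ha0, ← hdecomp]
      exact Finset.sum_le_sum hbound
    have hsum : ∑ i ∈ Finset.range n, ((n-i:ℕ):ℝ)/((k:ℝ) + ((n-i:ℕ):ℝ)) * (1/T)
        = (1/(T:ℝ)) * ∑ j ∈ Finset.Icc 1 n, (j:ℝ)/((k:ℝ) + (j:ℝ)) := by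
      rw [Finset.mul_sum,
        ← Finset.sum_range_reflect (fun i => ((n-i:ℕ):ℝ)/((k:ℝ) + ((n-i:ℕ):ℝ)) * (1/(T:ℝ))) n,
        ← Finset.Ico_add_one_right_eq_Icc, Finset.sum_Ico_eq_sum_range]
      apply Finset.sum_congr (by norm_num)
      intro i hi
      have hi' := Finset.mem_range.mp hi
      have h : n - (n - 1 - i) = 1 + i := by omega
      rw [h]
      ring
    rw [ge_iff_le]
    calc (∫ x in (0:ℝ)..(1 - (k:ℝ)/T), F x)
        ≤ ∑ i ∈ Finset.range n, ((n-i:ℕ):ℝ)/((k:ℝ) + ((n-i:ℕ):ℝ)) * (1/T) := hchain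
      _ = (1/(T:ℝ)) * ∑ j ∈ Finset.Icc 1 n, (j:ℝ)/((k:ℝ) + (j:ℝ)) := hsum
end

section
/- For any integers T ≥ 1 and 0 ≤ k ≤ T, (1/T)·(k + Σ_{j=1}^{T-k} j/(k+j)) ≥ 1 - 1/e. -/
lemma log_le_div_exp' {y : ℝ} (hy : 0 < y) : Real.log y ≤ y / Real.exp 1 := by
  have h := Real.log_le_sub_one_of_pos (show 0 < y / Real.exp 1 by positivity)
  rw [Real.log_div (ne_of_gt hy) (by positivity), Real.log_exp] at h
  linarith

lemma sum_inv_le_log' (k : ℕ) (hk : 1 ≤ k) (n : ℕ) :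
    ∑ j ∈ Finset.Icc 1 n, (1:ℝ) / ((k:ℝ) + j)
      ≤ Real.log ((k:ℝ) + n) - Real.log k := by
  induction n with
  | zero => simp
  | succ n ih =>
    rw [Finset.sum_Icc_succ_top (by omega)]
    have hk0 : (0:ℝ) < (k:ℝ) := by exact_mod_cast hk
    have hkn : (0:ℝ) < (k:ℝ) + n := by positivity
    have h1 : Real.log (((k:ℝ)+n) / ((k:ℝ)+n+1)) ≤ ((k:ℝ)+n)/((k:ℝ)+n+1) - 1 :=
      Real.log_le_sub_one_of_pos (by positivity)
    rw [Real.log_div (ne_of_gt hkn) (by positivity)] at h1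
    have h2 : ((k:ℝ)+n)/((k:ℝ)+n+1) - 1 = -(1/((k:ℝ)+n+1)) := by field_simp; ring
    push_cast
    have e : (k:ℝ)+((n:ℝ)+1) = (k:ℝ)+(n:ℝ)+1 := by ring
    rw [e]
    linarith

theorem stmt_8 (T k : ℕ) (hT : 1 ≤ T) (hk : k ≤ T) :
    (1 / (T : ℝ)) * ((k : ℝ) + ∑ j ∈ Finset.Icc 1 (T - k), (j : ℝ) / ((k : ℝ) + (j : ℝ)))
      ≥ 1 - 1 / Real.exp 1 := by
  have hT0 : (0:ℝ) < (T:ℝ) := by exact_mod_cast hT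
  rcases Nat.eq_zero_or_pos k with hk0 | hk1
  · subst hk0
    have hone : ∀ j ∈ Finset.Icc 1 (T - 0), ((j:ℝ)) / (((0:ℕ):ℝ) + (j:ℝ)) = 1 := by
      intro j hj
      have hj1 : 1 ≤ j := (Finset.mem_Icc.mp hj).1
      have : (0:ℝ) < (j:ℝ) := by exact_mod_cast hj1
      push_cast
      field_simp
      ring
    rw [Finset.sum_congr rfl hone, Finset.sum_const, Nat.card_Icc]
    simp only [Nat.cast_zero, Nat.sub_zero, Nat.add_sub_cancel, nsmul_eq_mul, mul_one]
    have he : (0:ℝ) < 1 / Real.exp 1 := by positivity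
    rw [zero_add, one_div_mul_cancel (ne_of_gt hT0)]
    linarith
  · set n := T - k with hn
    have hkT : (k:ℝ) + (n:ℝ) = (T:ℝ) := by
      have : k + n = T := by omega
      exact_mod_cast this
    have hk0 : (0:ℝ) < (k:ℝ) := by exact_mod_cast hk1
    set S := ∑ j ∈ Finset.Icc 1 n, (1:ℝ) / ((k:ℝ) + j) with hS
    have hsum : ∑ j ∈ Finset.Icc 1 n, ((j:ℝ)) / ((k:ℝ) + (j:ℝ)) = (n:ℝ) - (k:ℝ) * S := by
      have h : ∀ j ∈ Finset.Icc 1 n, ((j:ℝ)) / ((k:ℝ) + (j:ℝ)) = 1 - (k:ℝ) * (1 / ((k:ℝ) + j)) := by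
        intro j hj
        have hj1 : 1 ≤ j := (Finset.mem_Icc.mp hj).1
        have hjpos : (0:ℝ) < (j:ℝ) := by exact_mod_cast hj1
        have : (0:ℝ) < (k:ℝ) + (j:ℝ) := by positivity
        field_simp
        ring
      rw [Finset.sum_congr rfl h, Finset.sum_sub_distrib, Finset.sum_const, Nat.card_Icc,
        ← Finset.mul_sum, hS]
      simp
    rw [hsum]
    have hlog : S ≤ Real.log ((T:ℝ)/(k:ℝ)) := by
      have := sum_inv_le_log' k hk1 n
      rw [hkT] at this
      rw [Real.log_div (ne_of_gt hT0) (ne_of_gt hk0)]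
      exact this
    have hbound : (k:ℝ) / (T:ℝ) * S ≤ 1 / Real.exp 1 := by
      have h1 : (k:ℝ) / (T:ℝ) * S ≤ (k:ℝ) / (T:ℝ) * Real.log ((T:ℝ)/(k:ℝ)) := by
        apply mul_le_mul_of_nonneg_left hlog (by positivity)
      have h2 : Real.log ((T:ℝ)/(k:ℝ)) ≤ ((T:ℝ)/(k:ℝ)) / Real.exp 1 :=
        log_le_div_exp' (by positivity)
      have h3 : (k:ℝ) / (T:ℝ) * (((T:ℝ)/(k:ℝ)) / Real.exp 1) = 1 / Real.exp 1 := by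
        field_simp
      calc (k:ℝ) / (T:ℝ) * S ≤ (k:ℝ) / (T:ℝ) * Real.log ((T:ℝ)/(k:ℝ)) := h1
        _ ≤ (k:ℝ) / (T:ℝ) * (((T:ℝ)/(k:ℝ)) / Real.exp 1) :=
            mul_le_mul_of_nonneg_left h2 (by positivity)
        _ = 1 / Real.exp 1 := h3
    have heq : (1 / (T:ℝ)) * ((k:ℝ) + ((n:ℝ) - (k:ℝ) * S)) = 1 - (k:ℝ)/(T:ℝ) * S := by
      field_simp
      linarith [hkT]
    rw [heq]
    linarith
end

section
/- Suppose v₁, v₂ : [T] → ℝ are non-negative, satisfy Σ_{j=1}^{T} v₁(j) = 1, satisfy Σ_{j=1}^{l} v₁(j) + Σ_{j=1}^{T-l} v₂(j) ≤ 1 for all 0 ≤ l < T, and satisfy the inequality Σ_{i=1}^{T-k} (T-i+1)·v₂(i) ≥ Σ_{i=k+1}^{T} (T-i+1)·v₁(i) (the valid inequality with ℓ = 0). Then Σ_{j=1}^{k} v₁(j) + Σ_{j=1}^{T-k} v₂(j) ≥ 1/T. -/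
theorem stmt_12 (T k : ℕ) (hT : 1 ≤ T) (hk : k < T)
    (v1 v2 : ℕ → ℝ)
    (hpos1 : ∀ j : ℕ, 1 ≤ j → j ≤ T → 0 ≤ v1 j)
    (hpos2 : ∀ j : ℕ, 1 ≤ j → j ≤ T → 0 ≤ v2 j)
    (hnorm : ∑ j ∈ Finset.Icc 1 T, v1 j = 1)
    (hwel : ∀ l : ℕ, l < T →
      (∑ j ∈ Finset.Icc 1 l, v1 j) + (∑ j ∈ Finset.Icc 1 (T - l), v2 j) ≤ 1)
    (hvalid : ∑ i ∈ Finset.Icc 1 (T - k), ((T : ℝ) - (i : ℝ) + 1) * v2 i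
      ≥ ∑ i ∈ Finset.Icc (k + 1) T, ((T : ℝ) - (i : ℝ) + 1) * v1 i) :
    (∑ j ∈ Finset.Icc 1 k, v1 j) + (∑ j ∈ Finset.Icc 1 (T - k), v2 j) ≥ 1 / (T : ℝ) := by
  set A := ∑ j ∈ Finset.Icc 1 k, v1 j with hAdef
  set B := ∑ j ∈ Finset.Icc 1 (T - k), v2 j with hBdef
  have hA : 0 ≤ A := Finset.sum_nonneg fun j hj => by
    rw [Finset.mem_Icc] at hj
    exact hpos1 j hj.1 (hj.2.trans hk.le)
  -- split the norm sum
  have hsplit : A + ∑ i ∈ Finset.Icc (k + 1) T, v1 i = 1 := by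
    rw [hAdef, ← hnorm]
    have h1 : Finset.Icc 1 k = Finset.Ioc 0 k := by
      ext x; simp [Nat.lt_iff_add_one_le]
    have h2 : Finset.Icc (k + 1) T = Finset.Ioc k T := by
      ext x; simp only [Finset.mem_Icc, Finset.mem_Ioc]; omega
    have h3 : Finset.Icc 1 T = Finset.Ioc 0 T := by
      ext x; simp [Nat.lt_iff_add_one_le]
    rw [h1, h2, h3, Finset.sum_Ioc_consecutive _ (Nat.zero_le k) hk.le]
  -- upper bound on weighted v2 sum
  have hub : ∑ i ∈ Finset.Icc 1 (T - k), ((T : ℝ) - (i : ℝ) + 1) * v2 i ≤ (T : ℝ) * B := by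
    rw [hBdef, Finset.mul_sum]
    apply Finset.sum_le_sum
    intro i hi
    rw [Finset.mem_Icc] at hi
    have hi1 : (1 : ℝ) ≤ (i : ℝ) := by exact_mod_cast hi.1
    have hv : 0 ≤ v2 i := hpos2 i hi.1 (hi.2.trans (Nat.sub_le T k))
    nlinarith
  -- lower bound on weighted v1 sum
  have hlb : ∑ i ∈ Finset.Icc (k + 1) T, v1 i
      ≤ ∑ i ∈ Finset.Icc (k + 1) T, ((T : ℝ) - (i : ℝ) + 1) * v1 i := by
    apply Finset.sum_le_sum
    intro i hi
    rw [Finset.mem_Icc] at hi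
    have hiT : (i : ℝ) ≤ (T : ℝ) := by exact_mod_cast hi.2
    have hv : 0 ≤ v1 i := hpos1 i (le_trans (Nat.le_add_left 1 k) hi.1) hi.2
    nlinarith
  have hT' : (1 : ℝ) ≤ (T : ℝ) := by exact_mod_cast hT
  have key : 1 - A ≤ (T : ℝ) * B := by linarith
  rw [ge_iff_le, div_le_iff₀ (by linarith)]
  nlinarith
end

section
/- In the two-buyer sequential second-price auction, the forward utility of buyer i at any decision node x equals max_{j∈{1,2}} [v_j(x_j+1) + U(x+e_j)] - v_{-i}(x_{-i}+1) - u_{-i}(x+e_{-i}), where U(y) = u_1(y)+u_2(y). -/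
/-- Forward utilities of the two buyers in the two-buyer sequential second-price
auction with `T` items, computed by backward induction (Gale–Stegeman model).
At a tie the item is given to buyer 1; this does not affect the utilities. -/
noncomputable def util (T : ℕ) (v1 v2 : ℕ → ℝ) : ℕ → ℕ → ℝ × ℝ
  | x1, x2 =>
    if _h : T ≤ x1 + x2 then (0, 0)
    else
      let uL := util T v1 v2 (x1 + 1) x2
      let uR := util T v1 v2 x1 (x2 + 1)
      let b1 := v1 (x1 + 1) + uL.1 - uR.1
      let b2 := v2 (x2 + 1) + uR.2 - uL.2
      if b2 ≤ b1 then (v1 (x1 + 1) - b2 + uL.1, uL.2)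
      else (uR.1, v2 (x2 + 1) - b1 + uR.2)
  termination_by x1 x2 => T - x1 - x2
  decreasing_by all_goals omega

theorem stmt_15 (T : ℕ) (v1 v2 : ℕ → ℝ) (x1 x2 : ℕ) (hx : x1 + x2 < T) :
    (util T v1 v2 x1 x2).1
        = max (v1 (x1 + 1) + ((util T v1 v2 (x1 + 1) x2).1 + (util T v1 v2 (x1 + 1) x2).2))
            (v2 (x2 + 1) + ((util T v1 v2 x1 (x2 + 1)).1 + (util T v1 v2 x1 (x2 + 1)).2))
          - v2 (x2 + 1) - (util T v1 v2 x1 (x2 + 1)).2 ∧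
      (util T v1 v2 x1 x2).2
        = max (v1 (x1 + 1) + ((util T v1 v2 (x1 + 1) x2).1 + (util T v1 v2 (x1 + 1) x2).2))
            (v2 (x2 + 1) + ((util T v1 v2 x1 (x2 + 1)).1 + (util T v1 v2 x1 (x2 + 1)).2))
          - v1 (x1 + 1) - (util T v1 v2 (x1 + 1) x2).1 := by
  have h : ¬ T ≤ x1 + x2 := by omega
  rw [util]
  simp only [h, dif_neg, not_false_iff]
  set uL := util T v1 v2 (x1 + 1) x2
  set uR := util T v1 v2 x1 (x2 + 1)
  by_cases hb : v2 (x2 + 1) + uR.2 - uL.2 ≤ v1 (x1 + 1) + uL.1 - uR.1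
  · rw [if_pos hb]
    have hm : max (v1 (x1 + 1) + (uL.1 + uL.2)) (v2 (x2 + 1) + (uR.1 + uR.2))
        = v1 (x1 + 1) + (uL.1 + uL.2) := max_eq_left (by linarith)
    constructor <;> simp [hm] <;> ring
  · rw [if_neg hb]
    have hm : max (v1 (x1 + 1) + (uL.1 + uL.2)) (v2 (x2 + 1) + (uR.1 + uR.2))
        = v2 (x2 + 1) + (uR.1 + uR.2) := max_eq_right (by linarith)
    constructor <;> simp [hm] <;> ring
end

section
/- Let P be a path from decision node x to a terminal node, with first step to x+e₁, and suppose the optimal welfare from x is attained by some allocation giving buyer 1 at least one item (∃k>0 with SW(k|x) = OPT(x)). If all incremental values are non-negative, then the efficiency of P is at least the efficiency of the subpath of P starting at x+e₁: Γ(P) ≥ Γ(P^{t(x)-1}). -/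
/-- Social welfare, from decision node `(x1, x2)` of a `T`-item two-buyer auction,
of the allocation in which buyer 1 wins exactly `k` more items (and buyer 2 the rest). -/
noncomputable def sw (T : ℕ) (v1 v2 : ℕ → ℝ) (x1 x2 k : ℕ) : ℝ :=
  (∑ j ∈ Finset.Icc (x1 + 1) (x1 + k), v1 j) + ∑ j ∈ Finset.Icc (x2 + 1) (T - x1 - k), v2 j

/-- Optimal social welfare from node `(x1, x2)`. -/
noncomputable def opt (T : ℕ) (v1 v2 : ℕ → ℝ) (x1 x2 : ℕ) : ℝ :=
  (Finset.range (T - x1 - x2 + 1)).sup' (Finset.nonempty_range_iff.mpr (Nat.succ_ne_zero _))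
    (fun k => sw T v1 v2 x1 x2 k)

/-- Efficiency of a path from node `(x1, x2)` ending at the terminal node in which
buyer 1 owns `y1` items in total. -/
noncomputable def eff (T : ℕ) (v1 v2 : ℕ → ℝ) (x1 x2 y1 : ℕ) : ℝ :=
  if opt T v1 v2 x1 x2 = 0 then 1 else sw T v1 v2 x1 x2 (y1 - x1) / opt T v1 v2 x1 x2

lemma sw_nonneg (T : ℕ) (v1 v2 : ℕ → ℝ) (hv1 : ∀ j, 0 ≤ v1 j) (hv2 : ∀ j, 0 ≤ v2 j)
    (x1 x2 k : ℕ) : 0 ≤ sw T v1 v2 x1 x2 k :=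
  add_nonneg (Finset.sum_nonneg fun j _ => hv1 j) (Finset.sum_nonneg fun j _ => hv2 j)

lemma le_opt (T : ℕ) (v1 v2 : ℕ → ℝ) (x1 x2 k : ℕ) (hk : k ≤ T - x1 - x2) :
    sw T v1 v2 x1 x2 k ≤ opt T v1 v2 x1 x2 :=
  Finset.le_sup' _ (Finset.mem_range.mpr (by omega))

lemma sw_shift (T : ℕ) (v1 v2 : ℕ → ℝ) (x1 x2 k : ℕ) :
    sw T v1 v2 (x1 + 1) x2 k = sw T v1 v2 x1 x2 (k + 1) - v1 (x1 + 1) := by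
  unfold sw
  have h1 : T - (x1 + 1) - k = T - x1 - (k + 1) := by omega
  have h2 : x1 + (k + 1) = x1 + 1 + k := by omega
  rw [h1, h2, Finset.Icc_eq_cons_Ioc (by omega : x1 + 1 ≤ x1 + 1 + k), Finset.sum_cons]
  have h3 : Finset.Ioc (x1 + 1) (x1 + 1 + k) = Finset.Icc (x1 + 1 + 1) (x1 + 1 + k) := by
    rw [← Finset.Icc_add_one_left_eq_Ioc]
  rw [h3]; ring

theorem stmt_18 (T : ℕ) (v1 v2 : ℕ → ℝ)
    (hv1 : ∀ j, 0 ≤ v1 j) (hv2 : ∀ j, 0 ≤ v2 j)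
    (x1 x2 : ℕ) (hx : x1 + x2 < T)
    (hopt : ∃ k : ℕ, 0 < k ∧ k ≤ T - x1 - x2 ∧ sw T v1 v2 x1 x2 k = opt T v1 v2 x1 x2)
    (y1 : ℕ) (hy1 : x1 + 1 ≤ y1) (hy2 : y1 ≤ T - x2) :
    eff T v1 v2 x1 x2 y1 ≥ eff T v1 v2 (x1 + 1) x2 y1 := by
  obtain ⟨k0, hk00, hk0t, hk0s⟩ := hopt
  have hOsh : opt T v1 v2 (x1+1) x2 = opt T v1 v2 x1 x2 - v1 (x1+1) := by
    apply le_antisymm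
    · apply Finset.sup'_le
      intro k hk
      rw [sw_shift]
      have hm := Finset.mem_range.mp hk
      have : sw T v1 v2 x1 x2 (k+1) ≤ opt T v1 v2 x1 x2 :=
        le_opt T v1 v2 x1 x2 (k+1) (by omega)
      linarith
    · have h := Finset.le_sup' (fun k => sw T v1 v2 (x1+1) x2 k)
        (Finset.mem_range.mpr (by omega : k0 - 1 < T - (x1+1) - x2 + 1))
      rw [sw_shift] at h
      have hk1 : k0 - 1 + 1 = k0 := by omega
      rw [hk1, hk0s] at h
      exact h
  have hSsh : sw T v1 v2 (x1+1) x2 (y1-(x1+1)) = sw T v1 v2 x1 x2 (y1-x1) - v1 (x1+1) := by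
    rw [sw_shift]
    have : y1 - (x1+1) + 1 = y1 - x1 := by omega
    rw [this]
  have hO0 : 0 ≤ opt T v1 v2 x1 x2 :=
    le_trans (sw_nonneg T v1 v2 hv1 hv2 x1 x2 0) (le_opt T v1 v2 x1 x2 0 (by omega))
  have hO'0 : 0 ≤ opt T v1 v2 (x1+1) x2 :=
    le_trans (sw_nonneg T v1 v2 hv1 hv2 (x1+1) x2 0) (le_opt T v1 v2 (x1+1) x2 0 (by omega))
  have hSleO : sw T v1 v2 x1 x2 (y1 - x1) ≤ opt T v1 v2 x1 x2 :=
    le_opt T v1 v2 x1 x2 (y1 - x1) (by omega)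
  have hvS : v1 (x1+1) ≤ sw T v1 v2 x1 x2 (y1 - x1) := by
    unfold sw
    have h1 : v1 (x1+1) ≤ ∑ j ∈ Finset.Icc (x1 + 1) (x1 + (y1 - x1)), v1 j := by
      apply Finset.single_le_sum (fun j _ => hv1 j)
      simp only [Finset.mem_Icc]
      omega
    have h2 : (0:ℝ) ≤ ∑ j ∈ Finset.Icc (x2 + 1) (T - x1 - (y1 - x1)), v2 j :=
      Finset.sum_nonneg fun j _ => hv2 j
    linarith
  unfold eff
  by_cases hO : opt T v1 v2 x1 x2 = 0
  · have hv0 : opt T v1 v2 (x1+1) x2 = 0 := by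
      have hv := hv1 (x1+1)
      have : opt T v1 v2 (x1+1) x2 ≤ 0 := by rw [hOsh, hO]; linarith
      linarith
    simp [hO, hv0]
  · have hOpos : 0 < opt T v1 v2 x1 x2 := lt_of_le_of_ne hO0 (Ne.symm hO)
    by_cases hO' : opt T v1 v2 (x1+1) x2 = 0
    · simp only [hO, hO', if_false, if_true]
      rw [ge_iff_le, le_div_iff₀ hOpos, one_mul]
      have : v1 (x1+1) = opt T v1 v2 x1 x2 := by rw [hOsh] at hO'; linarith
      linarith
    · have hO'pos : 0 < opt T v1 v2 (x1+1) x2 := lt_of_le_of_ne hO'0 (Ne.symm hO')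
      simp only [hO, hO', if_false]
      rw [ge_iff_le, hSsh, hOsh, div_le_div_iff₀ (by rw [hOsh] at hO'pos; linarith) hOpos]
      have hv := hv1 (x1+1)
      nlinarith
end

section
/- Fix T ≥ 1, suppose for buyer 1 the incremental valuations are v₁(j) = 1 for all j, and for buyer 2 they are v₂(j) = (T-k-j+1)/(T-j+1) for 1 ≤ j ≤ T-k and 0 otherwise (where 0 ≤ k < T). Then the functions u₁(x₁,x₂) = (T-x₁-x₂)·(1 - v₂(x₂+1)) and u₂(x₁,x₂) = 0 satisfy the backward-induction equations for forward utilities in the two-buyer sequential second-price auction, and at every node (0,ℓ) with 0 ≤ ℓ < T-k the two buyers' bids tie. -/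
lemma util_term (T : ℕ) (v1 v2 : ℕ → ℝ) (x1 x2 : ℕ) (h : T ≤ x1 + x2) :
    util T v1 v2 x1 x2 = (0, 0) := by
  rw [util, dif_pos h]

lemma util_step (T : ℕ) (v1 v2 : ℕ → ℝ) (x1 x2 : ℕ) (h : x1 + x2 < T) :
    util T v1 v2 x1 x2 =
      if v2 (x2 + 1) + (util T v1 v2 x1 (x2+1)).2 - (util T v1 v2 (x1+1) x2).2 ≤
          v1 (x1 + 1) + (util T v1 v2 (x1+1) x2).1 - (util T v1 v2 x1 (x2+1)).1 then
        (v1 (x1 + 1) - (v2 (x2 + 1) + (util T v1 v2 x1 (x2+1)).2 - (util T v1 v2 (x1+1) x2).2) + (util T v1 v2 (x1+1) x2).1, (util T v1 v2 (x1+1) x2).2)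
      else ((util T v1 v2 x1 (x2+1)).1, v2 (x2 + 1) - (v1 (x1 + 1) + (util T v1 v2 (x1+1) x2).1 - (util T v1 v2 x1 (x2+1)).1) + (util T v1 v2 x1 (x2+1)).2) := by
  rw [util, dif_neg (by omega)]

lemma util_formula (T k : ℕ) (hk : k < T)
    (v1 v2 : ℕ → ℝ)
    (hv1 : ∀ j : ℕ, v1 j = 1)
    (hv2 : ∀ j : ℕ, 1 ≤ j → j ≤ T - k →
      v2 j = ((T : ℝ) - (k : ℝ) - (j : ℝ) + 1) / ((T : ℝ) - (j : ℝ) + 1))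
    (hv2' : ∀ j : ℕ, T - k < j → v2 j = 0) :
    ∀ n x1 x2 : ℕ, x1 + x2 ≤ T → T - (x1 + x2) ≤ n →
      util T v1 v2 x1 x2 = (((T : ℝ) - (x1 : ℝ) - (x2 : ℝ)) * (1 - v2 (x2 + 1)), 0) := by
  intro n
  induction n with
  | zero =>
    intro x1 x2 h1 h2
    have hx : x1 + x2 = T := by omega
    rw [util_term _ _ _ _ _ (by omega)]
    have : (T : ℝ) - (x1 : ℝ) - (x2 : ℝ) = 0 := by
      have : ((x1 + x2 : ℕ) : ℝ) = (T : ℝ) := by rw [hx]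
      push_cast at this; linarith
    rw [this]; norm_num
  | succ n ih =>
    intro x1 x2 h1 h2
    rcases eq_or_lt_of_le h1 with heq | hlt
    · rw [util_term _ _ _ _ _ (by omega)]
      have : (T : ℝ) - (x1 : ℝ) - (x2 : ℝ) = 0 := by
        have : ((x1 + x2 + 0 : ℕ) : ℝ) = (T : ℝ) := by rw [heq]; norm_num
        push_cast at this; linarith
      rw [this]; norm_num
    · have ihL := ih (x1 + 1) x2 (by omega) (by omega)
      have ihR := ih x1 (x2 + 1) (by omega) (by omega)
      rw [util_step _ _ _ _ _ hlt, ihL, ihR, hv1]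
      push_cast
      set p : ℝ := v2 (x2 + 1) with hp
      set q : ℝ := v2 (x2 + 2) with hq
      set c : ℝ := (T : ℝ) - x1 - x2 with hc
      have hcd : c ≤ (T:ℝ) - x2 := by
        have : (0:ℝ) ≤ x1 := Nat.cast_nonneg x1
        rw [hc]; linarith
      have hc1 : (1:ℝ) ≤ c := by
        have : ((x1 + x2 + 1 : ℕ) : ℝ) ≤ (T : ℝ) := by exact_mod_cast hlt
        rw [hc]; push_cast at this; linarith
      have hk0 : (0:ℝ) ≤ (k:ℝ) := Nat.cast_nonneg k
      have key : p + 0 - 0 ≤ 1 + ((T:ℝ) - (x1+1) - x2) * (1 - p) - ((T:ℝ) - x1 - (x2+1)) * (1 - q) := by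
        have harg1 : ((T:ℝ) - ((x1:ℝ)+1) - x2) = c - 1 := by rw [hc]; ring
        have harg2 : ((T:ℝ) - x1 - ((x2:ℝ)+1)) = c - 1 := by rw [hc]; ring
        rw [harg1, harg2]
        rcases le_or_gt (x2 + 2) (T - k) with hA | hA
        · have hT2 : ((x2:ℝ)) + 2 ≤ (T:ℝ) := by
            exact_mod_cast (by push_cast; exact_mod_cast (by omega : x2 + 2 ≤ T) : ((x2:ℝ)+2 ≤ (T:ℝ)))
          have hd0 : (0:ℝ) < (T:ℝ) - x2 := by linarith
          have hd1 : (0:ℝ) < (T:ℝ) - x2 - 1 := by linarith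
          have hne : (T:ℝ) - x2 ≠ 0 := ne_of_gt hd0
          have hne1 : (T:ℝ) - x2 - 1 ≠ 0 := ne_of_gt hd1
          have hp2 : p = 1 - (k:ℝ) / ((T:ℝ) - x2) := by
            rw [hp, hv2 (x2+1) (by omega) (by omega)]
            push_cast
            rw [show ((T:ℝ) - k - ((x2:ℝ)+1) + 1) = ((T:ℝ) - x2) - k from by ring,
                show ((T:ℝ) - ((x2:ℝ)+1) + 1) = (T:ℝ) - x2 from by ring,
                sub_div, div_self hne]
          have hq2 : q = 1 - (k:ℝ) / ((T:ℝ) - x2 - 1) := by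
            rw [hq, hv2 (x2+2) (by omega) hA]
            push_cast
            rw [show ((T:ℝ) - k - ((x2:ℝ)+2) + 1) = ((T:ℝ) - x2 - 1) - k from by ring,
                show ((T:ℝ) - ((x2:ℝ)+2) + 1) = (T:ℝ) - x2 - 1 from by ring,
                sub_div, div_self hne1]
          have hE : 1 + (c-1) * (1 - p) - (c-1) * (1 - q) - (p + 0 - 0)
              = ((k:ℝ) * (((T:ℝ) - x2) - c)) / (((T:ℝ) - x2) * ((T:ℝ) - x2 - 1)) := by
            rw [hp2, hq2]
            field_simp
            ring
          have hE0 : (0:ℝ) ≤ ((k:ℝ) * (((T:ℝ) - x2) - c)) / (((T:ℝ) - x2) * ((T:ℝ) - x2 - 1)) :=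
            div_nonneg (mul_nonneg hk0 (by linarith)) (by positivity)
          linarith [hE ▸ hE0]
        · rcases le_or_gt (x2 + 1) (T - k) with hB | hB
          · have hdk : (T:ℝ) - x2 = (k:ℝ) + 1 := by
              have : ((x2 + k + 1 : ℕ) : ℝ) = (T : ℝ) := by exact_mod_cast (by omega : x2 + k + 1 = T)
              push_cast at this; linarith
            have hd0 : (0:ℝ) < (T:ℝ) - x2 := by rw [hdk]; positivity
            have hne : (T:ℝ) - x2 ≠ 0 := ne_of_gt hd0
            have hp2 : p = 1 / ((T:ℝ) - x2) := by
              rw [hp, hv2 (x2+1) (by omega) hB]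
              push_cast
              rw [show ((T:ℝ) - k - ((x2:ℝ)+1) + 1) = 1 from by linarith,
                  show ((T:ℝ) - ((x2:ℝ)+1) + 1) = (T:ℝ) - x2 from by ring]
            have hq2 : q = 0 := by rw [hq]; exact hv2' (x2+2) (by omega)
            have hE : 1 + (c-1) * (1 - p) - (c-1) * (1 - q) - (p + 0 - 0)
                = (((T:ℝ) - x2) - c) / ((T:ℝ) - x2) := by
              rw [hp2, hq2]
              field_simp
              ring
            have hE0 : (0:ℝ) ≤ (((T:ℝ) - x2) - c) / ((T:ℝ) - x2) :=
              div_nonneg (by linarith) (le_of_lt hd0)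
            linarith [hE ▸ hE0]
          · have hp2 : p = 0 := by rw [hp]; exact hv2' (x2+1) (by omega)
            have hq2 : q = 0 := by rw [hq]; exact hv2' (x2+2) (by omega)
            rw [hp2, hq2]; nlinarith
      rw [if_pos key]
      simp only [Prod.mk.injEq]
      refine ⟨?_, by trivial⟩
      rw [hc]
      ring

theorem stmt_19 (T k : ℕ) (hT : 1 ≤ T) (hk : k < T)
    (v1 v2 : ℕ → ℝ)
    (hv1 : ∀ j : ℕ, v1 j = 1)
    (hv2 : ∀ j : ℕ, 1 ≤ j → j ≤ T - k →
      v2 j = ((T : ℝ) - (k : ℝ) - (j : ℝ) + 1) / ((T : ℝ) - (j : ℝ) + 1))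
    (hv2' : ∀ j : ℕ, T - k < j → v2 j = 0) :
    (∀ x1 x2 : ℕ, x1 + x2 ≤ T →
        util T v1 v2 x1 x2 = (((T : ℝ) - (x1 : ℝ) - (x2 : ℝ)) * (1 - v2 (x2 + 1)), 0)) ∧
      ∀ ℓ : ℕ, ℓ < T - k →
        v1 1 + (util T v1 v2 1 ℓ).1 - (util T v1 v2 0 (ℓ + 1)).1
          = v2 (ℓ + 1) + (util T v1 v2 0 (ℓ + 1)).2 - (util T v1 v2 1 ℓ).2 := by
  have hmain : ∀ x1 x2 : ℕ, x1 + x2 ≤ T →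
      util T v1 v2 x1 x2 = (((T : ℝ) - (x1 : ℝ) - (x2 : ℝ)) * (1 - v2 (x2 + 1)), 0) :=
    fun x1 x2 h => util_formula T k hk v1 v2 hv1 hv2 hv2' T x1 x2 h (by omega)
  refine ⟨hmain, ?_⟩
  intro ℓ hℓ
  rw [hv1, hmain 1 ℓ (by omega), hmain 0 (ℓ+1) (by omega)]
  simp only
  push_cast
  set p : ℝ := v2 (ℓ + 1) with hp
  set q : ℝ := v2 (ℓ + 1 + 1) with hq
  rcases le_or_gt (ℓ + 2) (T - k) with hA | hA
  · have hT2 : ((ℓ:ℝ)) + 2 ≤ (T:ℝ) := by exact_mod_cast (by omega : ℓ + 2 ≤ T)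
    have hd0 : (0:ℝ) < (T:ℝ) - ℓ := by linarith
    have hd1 : (0:ℝ) < (T:ℝ) - ℓ - 1 := by linarith
    have hne : (T:ℝ) - ℓ ≠ 0 := ne_of_gt hd0
    have hne1 : (T:ℝ) - ℓ - 1 ≠ 0 := ne_of_gt hd1
    have hp2 : p = 1 - (k:ℝ) / ((T:ℝ) - ℓ) := by
      rw [hp, hv2 (ℓ+1) (by omega) (by omega)]
      push_cast
      rw [show ((T:ℝ) - k - ((ℓ:ℝ)+1) + 1) = ((T:ℝ) - ℓ) - k from by ring,
          show ((T:ℝ) - ((ℓ:ℝ)+1) + 1) = (T:ℝ) - ℓ from by ring,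
          sub_div, div_self hne]
    have hq2 : q = 1 - (k:ℝ) / ((T:ℝ) - ℓ - 1) := by
      rw [hq, show ℓ + 1 + 1 = ℓ + 2 from rfl, hv2 (ℓ+2) (by omega) hA]
      push_cast
      rw [show ((T:ℝ) - k - ((ℓ:ℝ)+2) + 1) = ((T:ℝ) - ℓ - 1) - k from by ring,
          show ((T:ℝ) - ((ℓ:ℝ)+2) + 1) = (T:ℝ) - ℓ - 1 from by ring,
          sub_div, div_self hne1]
    rw [hp2, hq2]
    field_simp
    ring
  · have hB : ℓ + 1 = T - k := by omega
    have hdk : (T:ℝ) - ℓ = (k:ℝ) + 1 := by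
      have : ((ℓ + k + 1 : ℕ) : ℝ) = (T : ℝ) := by exact_mod_cast (by omega : ℓ + k + 1 = T)
      push_cast at this; linarith
    have hd0 : (0:ℝ) < (T:ℝ) - ℓ := by rw [hdk]; positivity
    have hne : (T:ℝ) - ℓ ≠ 0 := ne_of_gt hd0
    have hp2 : p = 1 / ((T:ℝ) - ℓ) := by
      rw [hp, hv2 (ℓ+1) (by omega) (by omega)]
      push_cast
      rw [show ((T:ℝ) - k - ((ℓ:ℝ)+1) + 1) = 1 from by linarith,
          show ((T:ℝ) - ((ℓ:ℝ)+1) + 1) = (T:ℝ) - ℓ from by ring]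
    have hq2 : q = 0 := by rw [hq]; exact hv2' (ℓ+1+1) (by omega)
    rw [hp2, hq2]
    field_simp
    ring
end
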